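/- For every λ > 0 and every x ∈ ℝ, ∫_0^∞ e^{−λt} (4πt)^{−1/2} e^{−x²/(4t)} dt = e^{−|x|√λ}/(2√λ); that is, the Laplace transform in time of the Gauss kernel E(x, t) at λ equals G_λ(x) := e^{−√λ·|x|}/(2√λ). -/

import Mathlib

open MeasureTheory

open Set Real

lemma inv_scale {c : ℝ} (hc : 0 < c) (h : ℝ → ℝ) :
    (∫ w in Ioi (0:ℝ), c / w ^ 2 * h (c / w)) = ∫ y in Ioi (0:ℝ), h y := by
  have key := MeasureTheory.integral_comp_rpow_Ioi (fun y => c * h (c * y)) (p := -1) (by norm_num)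
  have scale := MeasureTheory.integral_comp_mul_left_Ioi (fun y => h y) 0 hc
  simp only [mul_zero, smul_eq_mul] at scale
  have rhs : (∫ y in Ioi (0:ℝ), c * h (c * y)) = ∫ y in Ioi (0:ℝ), h y := by
    rw [MeasureTheory.integral_const_mul, scale]
    field_simp
  rw [rhs] at key
  rw [← key]
  refine setIntegral_congr_fun measurableSet_Ioi (fun w hw => ?_)
  have hw0 : (0:ℝ) < w := hw
  have h1 : w ^ (-1:ℝ) = w⁻¹ := by
    rw [Real.rpow_neg_one]
  have h2 : w ^ ((-1:ℝ) - 1) = (w ^ 2)⁻¹ := by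
    rw [show ((-1:ℝ) - 1) = -(2:ℝ) by norm_num, Real.rpow_neg hw0.le, ← Real.rpow_natCast w 2]
    norm_num
  simp only [smul_eq_mul, h1, h2, abs_neg, abs_one]
  rw [div_eq_mul_inv c w, one_mul]
  ring

set_option maxHeartbeats 2000000 in
lemma schlomilch_aux {α β c u0 : ℝ} (hα : 0 < α) (hβ : 0 < β) (hc : 0 < c) (hu0 : 0 < u0)
    (hu0sq : u0 ^ 2 = c) (hαc : α * c = β) :
    (∫ u in Ioi (0:ℝ), Real.exp (-(α * u - β / u) ^ 2)) = Real.sqrt π / (2 * α) := by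
  have hαu0 : α * u0 = β / u0 := by
    rw [eq_div_iff hu0.ne']
    linear_combination α * hu0sq + hαc
  have hFE : ∃ F : ℝ → ℝ,
      F = fun u => Real.exp (-(α * u - β / u) ^ 2) * (α + β / u ^ 2) := ⟨_, rfl⟩
  obtain ⟨F, hF_def⟩ := hFE
  have hmeas : Measurable fun u : ℝ => Real.exp (-(α * u - β / u) ^ 2) := by fun_prop
  have hmeas2 : Measurable fun u : ℝ => c / u ^ 2 * Real.exp (-(α * u - β / u) ^ 2) := by fun_prop
  -- Gaussian comparison on [u0, ∞)
  have hgauss : Integrable (fun u : ℝ => Real.exp (-α ^ 2 * (u - u0) ^ 2)) := by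
    have := (integrable_exp_neg_mul_sq (show (0:ℝ) < α ^ 2 by positivity)).comp_sub_right u0
    simpa using this
  have hbound_Ici : ∀ u : ℝ, u ∈ Ici u0 → Real.exp (-(α * u - β / u) ^ 2)
      ≤ Real.exp (-α ^ 2 * (u - u0) ^ 2) := by
    intro u hu
    have hu' : u0 ≤ u := hu
    have hupos : 0 < u := lt_of_lt_of_le hu0 hu'
    apply Real.exp_le_exp.mpr
    have hdd : β / u ≤ β / u0 := div_le_div_of_nonneg_left hβ.le hu0 hu'
    have h1 : α * (u - u0) ≤ α * u - β / u := by nlinarith [hαu0]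
    have h2 : 0 ≤ α * (u - u0) := by nlinarith
    nlinarith
  -- integrability of exp(-(f u)^2) on (0,∞)
  have h1 : IntegrableOn (fun u : ℝ => Real.exp (-(α * u - β / u) ^ 2)) (Ioi 0) := by
    rw [← Ioo_union_Ici_eq_Ioi hu0]
    apply IntegrableOn.union
    · apply Measure.integrableOn_of_bounded (M := 1) (measure_Ioo_lt_top).ne
        hmeas.aestronglyMeasurable
      filter_upwards with u
      rw [Real.norm_eq_abs, abs_of_pos (Real.exp_pos _)]
      apply Real.exp_le_one_iff.mpr
      simp [sq_nonneg]
    · apply Integrable.mono hgauss.integrableOn hmeas.aestronglyMeasurable.restrict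
      rw [ae_restrict_iff' measurableSet_Ici]
      filter_upwards with u hu
      rw [Real.norm_eq_abs, abs_of_pos (Real.exp_pos _), Real.norm_eq_abs,
        abs_of_pos (Real.exp_pos _)]
      exact hbound_Ici u hu
  -- integrability of (c/u^2) exp(-(f u)^2) on (0,∞)
  have h2 : IntegrableOn (fun u : ℝ => c / u ^ 2 * Real.exp (-(α * u - β / u) ^ 2)) (Ioi 0) := by
    rw [← Ioo_union_Ici_eq_Ioi hu0]
    apply IntegrableOn.union
    · apply Measure.integrableOn_of_bounded (M := 2 * c / β ^ 2 * (1 + α * β))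
        (measure_Ioo_lt_top).ne hmeas2.aestronglyMeasurable
      rw [ae_restrict_iff' measurableSet_Ioo]
      filter_upwards with u hu
      obtain ⟨hu1, hu2⟩ := hu
      have hd : β / u0 ≤ β / u := div_le_div_of_nonneg_left hβ.le hu1 hu2.le
      have hαu_le : α * u ≤ α * u0 := by nlinarith
      have hαu0sq : (α * u0) ^ 2 = α * β := by linear_combination α ^ 2 * hu0sq + α * hαc
      have hau : 0 ≤ α * u := by positivity
      have hnn : (0:ℝ) ≤ c / u ^ 2 * Real.exp (-(α * u - β / u) ^ 2) := by positivity
      rw [Real.norm_eq_abs, abs_of_nonneg hnn,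
        show (α * u - β / u) ^ 2 = (β / u - α * u) ^ 2 from by ring,
        show c / u ^ 2 = c / β ^ 2 * (β / u - α * u + α * u) ^ 2 from by
          field_simp; ring]
      have hz : 0 ≤ β / u - α * u := by
        nlinarith [hαu0, mul_lt_mul_of_pos_left hu2 hα]
      generalize hzdef : β / u - α * u = z
      rw [hzdef] at hz
      have hep : 0 < Real.exp (-z ^ 2) := Real.exp_pos _
      have he1 : Real.exp (-z ^ 2) ≤ 1 := Real.exp_le_one_iff.mpr (by simp [sq_nonneg])
      have he2 : z ^ 2 * Real.exp (-z ^ 2) ≤ 1 := by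
        have h := Real.add_one_le_exp (z ^ 2)
        rw [Real.exp_neg, mul_inv_le_iff₀ (Real.exp_pos _)]
        linarith
      have hk : 0 ≤ c / β ^ 2 := by positivity
      have hsq2 : (α * u) ^ 2 * Real.exp (-z ^ 2) ≤ α * β := by
        have h5 : (α * u) ^ 2 ≤ (α * u0) ^ 2 := by nlinarith
        calc (α * u) ^ 2 * Real.exp (-z ^ 2) ≤ (α * u0) ^ 2 * 1 :=
              mul_le_mul h5 he1 hep.le (by positivity)
          _ = α * β := by rw [mul_one, hαu0sq]
      calc c / β ^ 2 * (z + α * u) ^ 2 * Real.exp (-z ^ 2)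
          ≤ c / β ^ 2 * (2 * z ^ 2 + 2 * (α * u) ^ 2) * Real.exp (-z ^ 2) := by
            have h6 : (z + α * u) ^ 2 ≤ 2 * z ^ 2 + 2 * (α * u) ^ 2 := by
              nlinarith [sq_nonneg (z - α * u)]
            exact mul_le_mul_of_nonneg_right (mul_le_mul_of_nonneg_left h6 hk) hep.le
        _ = 2 * (c / β ^ 2) * (z ^ 2 * Real.exp (-z ^ 2))
            + 2 * (c / β ^ 2) * ((α * u) ^ 2 * Real.exp (-z ^ 2)) := by ring
        _ ≤ 2 * (c / β ^ 2) * 1 + 2 * (c / β ^ 2) * (α * β) := by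
            have t1 := mul_le_mul_of_nonneg_left he2 (by positivity : (0:ℝ) ≤ 2 * (c / β ^ 2))
            have t2 := mul_le_mul_of_nonneg_left hsq2 (by positivity : (0:ℝ) ≤ 2 * (c / β ^ 2))
            linarith
        _ = 2 * c / β ^ 2 * (1 + α * β) := by ring
    · apply Integrable.mono hgauss.integrableOn hmeas2.aestronglyMeasurable.restrict
      rw [ae_restrict_iff' measurableSet_Ici]
      filter_upwards with u hu
      have hu' : u0 ≤ u := hu
      have hupos : 0 < u := lt_of_lt_of_le hu0 hu'
      rw [Real.norm_eq_abs, abs_of_nonneg (by positivity), Real.norm_eq_abs,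
        abs_of_pos (Real.exp_pos _)]
      have hcu : c / u ^ 2 ≤ 1 := by
        rw [div_le_one (by positivity)]
        nlinarith [hu0sq]
      calc c / u ^ 2 * Real.exp (-(α * u - β / u) ^ 2)
          ≤ 1 * Real.exp (-(α * u - β / u) ^ 2) :=
            mul_le_mul_of_nonneg_right hcu (Real.exp_pos _).le
        _ = Real.exp (-(α * u - β / u) ^ 2) := one_mul _
        _ ≤ Real.exp (-α ^ 2 * (u - u0) ^ 2) := hbound_Ici u hu
  -- F decomposition
  have hFdec : F = fun u => α * Real.exp (-(α * u - β / u) ^ 2)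
      + α * (c / u ^ 2 * Real.exp (-(α * u - β / u) ^ 2)) := by
    funext u
    have e : β / u ^ 2 = α * (c / u ^ 2) := by rw [mul_div_assoc', hαc]
    rw [hF_def]
    simp only
    rw [e]; ring
  have hF_int : IntegrableOn F (Ioi 0) := by
    rw [hFdec]; exact (h1.const_mul α).add (h2.const_mul α)
  -- inversion identity
  have step_inv : (∫ u in Ioi (0:ℝ), c / u ^ 2 * Real.exp (-(α * u - β / u) ^ 2))
      = ∫ u in Ioi (0:ℝ), Real.exp (-(α * u - β / u) ^ 2) := by
    have key := inv_scale hc (fun y => Real.exp (-(α * y - β / y) ^ 2))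
    rw [← key]
    refine setIntegral_congr_fun measurableSet_Ioi (fun w hw => ?_)
    have hw0 : (0:ℝ) < w := hw
    have eexp : (α * (c / w) - β / (c / w)) ^ 2 = (α * w - β / w) ^ 2 := by
      rw [← hαc]; field_simp; ring
    simp only [eexp]
  -- upper part via change of variables s = α u - β / u
  have hIci_sub : Ici u0 ⊆ Ioi (0:ℝ) := fun v hv => lt_of_lt_of_le hu0 hv
  have hIoo_sub : Ioo (0:ℝ) u0 ⊆ Ioi (0:ℝ) := Ioo_subset_Ioi_self
  have step_upper : (∫ u in Ioi u0, F u) = Real.sqrt π / 2 := by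
    have hcont : ContinuousOn (fun u : ℝ => α * u - β / u) (Ici u0) := by
      apply ContinuousOn.sub (continuous_const.mul continuous_id).continuousOn
      exact continuousOn_const.div continuousOn_id
        (fun v hv => (lt_of_lt_of_le hu0 hv).ne')
    have htt : Filter.Tendsto (fun u : ℝ => α * u - β / u) Filter.atTop Filter.atTop := by
      simp only [sub_eq_add_neg]
      apply Filter.Tendsto.atTop_add
      · exact (Filter.tendsto_id.const_mul_atTop hα)
      · have : Filter.Tendsto (fun u : ℝ => β / u) Filter.atTop (nhds 0) :=
          Filter.Tendsto.div_atTop tendsto_const_nhds Filter.tendsto_id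
        simpa using this.neg
    have hderiv : ∀ v ∈ Ioi u0, HasDerivWithinAt (fun u : ℝ => α * u - β / u)
        (α + β / v ^ 2) (Ioi v) v := by
      intro v hv
      have hvpos : 0 < v := lt_trans hu0 hv
      have d1 : HasDerivAt (fun u : ℝ => α * u) α v := by
        simpa using (hasDerivAt_id v).const_mul α
      have d2 : HasDerivAt (fun u : ℝ => β / u) (-(β / v ^ 2)) v := by
        have := (hasDerivAt_inv hvpos.ne').const_mul β
        simp only [div_eq_mul_inv]
        rw [show -(β * (v ^ 2)⁻¹) = β * -(v ^ 2)⁻¹ by ring]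
        exact this
      have := d1.sub d2
      have heq : α - -(β / v ^ 2) = α + β / v ^ 2 := by ring
      rw [heq] at this
      exact this.hasDerivWithinAt
    have hgcont : ContinuousOn (fun s : ℝ => Real.exp (-s ^ 2))
        ((fun u : ℝ => α * u - β / u) '' Ioi u0) := by
      apply Continuous.continuousOn
      fun_prop
    have hgint : Integrable (fun s : ℝ => Real.exp (-s ^ 2)) := by
      have := integrable_exp_neg_mul_sq (show (0:ℝ) < 1 by norm_num)
      simpa using this
    have hg1 : IntegrableOn (fun s : ℝ => Real.exp (-s ^ 2))
        ((fun u : ℝ => α * u - β / u) '' Ici u0) := hgint.integrableOn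
    have hg2 : IntegrableOn
        (fun u : ℝ => ((fun s : ℝ => Real.exp (-s ^ 2)) ∘ (fun u : ℝ => α * u - β / u)) u
          * (α + β / u ^ 2)) (Ici u0) := by
      have := hF_int.mono_set hIci_sub
      rw [hF_def] at this
      exact this
    have key := MeasureTheory.integral_comp_mul_deriv_Ioi hcont htt hderiv hgcont hg1 hg2
    have hf0 : α * u0 - β / u0 = 0 := by rw [hαu0]; ring
    rw [hf0] at key
    have hrhs : (∫ s in Ioi (0:ℝ), Real.exp (-s ^ 2)) = Real.sqrt π / 2 := by
      have := integral_gaussian_Ioi 1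
      simpa using this
    rw [hrhs] at key
    rw [← key, hF_def]
    rfl
  -- lower part equals upper part, via inversion
  have step_lower : (∫ u in Ioo (0:ℝ) u0, F u) = ∫ u in Ioi u0, F u := by
    have key := inv_scale hc ((Ioi u0).indicator F)
    have hrhs : (∫ y in Ioi (0:ℝ), (Ioi u0).indicator F y) = ∫ u in Ioi u0, F u := by
      rw [setIntegral_indicator measurableSet_Ioi, Ioi_inter_Ioi, sup_eq_right.mpr hu0.le]
    rw [hrhs] at key
    have hlhs : (∫ w in Ioi (0:ℝ), c / w ^ 2 * (Ioi u0).indicator F (c / w))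
        = ∫ u in Ioo (0:ℝ) u0, F u := by
      rw [show (∫ u in Ioo (0:ℝ) u0, F u) = ∫ u in Ioi (0:ℝ), (Ioo (0:ℝ) u0).indicator F u from
        by rw [setIntegral_indicator measurableSet_Ioo,
          inter_eq_self_of_subset_right hIoo_sub]]
      refine setIntegral_congr_fun measurableSet_Ioi (fun w hw => ?_)
      have hw0 : (0:ℝ) < w := hw
      by_cases hwu : w < u0
      · have hmem : c / w ∈ Ioi u0 := by
          rw [mem_Ioi, lt_div_iff₀ hw0]
          nlinarith [hu0sq]
        rw [indicator_of_mem hmem, indicator_of_mem (show w ∈ Ioo (0:ℝ) u0 from ⟨hw0, hwu⟩)]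
        rw [hF_def]
        simp only
        have eexp : (α * (c / w) - β / (c / w)) ^ 2 = (α * w - β / w) ^ 2 := by
          rw [← hαc]; field_simp; ring
        have efac : c / w ^ 2 * (α + β / (c / w) ^ 2) = α + β / w ^ 2 := by
          rw [← hαc]; field_simp; ring
        rw [eexp, ← efac]; ring
      · push_neg at hwu
        have hnmem : c / w ∉ Ioi u0 := by
          rw [mem_Ioi, not_lt, div_le_iff₀ hw0]
          nlinarith [hu0sq]
        rw [indicator_of_notMem hnmem, indicator_of_notMem (fun hx => absurd hx.2 (not_lt.mpr hwu))]
        ring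
    rw [hlhs] at key
    exact key
  -- splitting of the full integral
  have hsplit : (∫ u in Ioi (0:ℝ), F u)
      = (∫ u in Ioo (0:ℝ) u0, F u) + ∫ u in Ici u0, F u := by
    rw [← Ioo_union_Ici_eq_Ioi hu0]
    exact setIntegral_union ((Iio_disjoint_Ici le_rfl).mono_left Ioo_subset_Iio_self)
      measurableSet_Ici (hF_int.mono_set hIoo_sub) (hF_int.mono_set hIci_sub)
  have hIciIoi : (∫ u in Ici u0, F u) = ∫ u in Ioi u0, F u := integral_Ici_eq_integral_Ioi
  -- total value of ∫ F
  have htot : (∫ u in Ioi (0:ℝ), F u) = Real.sqrt π := by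
    rw [hsplit, hIciIoi, step_lower, step_upper]; ring
  -- linear decomposition of ∫ F
  have hlin : (∫ u in Ioi (0:ℝ), F u)
      = 2 * α * ∫ u in Ioi (0:ℝ), Real.exp (-(α * u - β / u) ^ 2) := by
    rw [hFdec, integral_add (h1.const_mul α) (h2.const_mul α),
      MeasureTheory.integral_const_mul, MeasureTheory.integral_const_mul, step_inv]
    ring
  rw [hlin] at htot
  rw [eq_div_iff (by positivity : (2:ℝ) * α ≠ 0)]
  linarith [htot]

lemma schlomilch {α β : ℝ} (hα : 0 < α) (hβ : 0 < β) :
    (∫ u in Ioi (0:ℝ), Real.exp (-(α * u - β / u) ^ 2)) = Real.sqrt π / (2 * α) :=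
  schlomilch_aux hα hβ (div_pos hβ hα) (Real.sqrt_pos.mpr (div_pos hβ hα))
    (Real.sq_sqrt (div_pos hβ hα).le) (by field_simp)

lemma exp_split (s m u l x2 : ℝ) (hu : u ≠ 0) (h1 : s ^ 2 = l) (h2 : m ^ 2 = x2) :
    -(l * u ^ 2 + x2 / 4 / u ^ 2) = -(m * s) + -((s * u - m / 2 / u) ^ 2) := by
  rw [← h1, ← h2]
  field_simp
  ring

/-- The Gauss kernel `E(x,t) = (4πt)^{−1/2} e^{−x²/(4t)}`. -/
noncomputable def gaussE (x t : ℝ) : ℝ :=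
  (4 * Real.pi * t) ^ (-(1 : ℝ) / 2) * Real.exp (-x ^ 2 / (4 * t))

set_option maxHeartbeats 2000000 in
/-- The Laplace transform in time of the Gauss kernel:
`∫_0^∞ e^{−λt} E(x,t) dt = e^{−|x|√λ}/(2√λ)` for `λ > 0`, `x ∈ ℝ`. -/
theorem stmt15 (l : ℝ) (hl : 0 < l) (x : ℝ) :
    (∫ t in Set.Ioi (0 : ℝ), Real.exp (-l * t) * gaussE x t) =
      Real.exp (-|x| * Real.sqrt l) / (2 * Real.sqrt l) := by
  have hsl : 0 < Real.sqrt l := Real.sqrt_pos.mpr hl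
  have hsp : 0 < Real.sqrt π := Real.sqrt_pos.mpr pi_pos
  -- the pointwise identity after substituting t = u^2
  have key_pt : ∀ u : ℝ, 0 < u →
      Real.exp (-l * u ^ 2) * gaussE x (u ^ 2) * (2 * u)
        = (Real.sqrt π)⁻¹ * Real.exp (-(l * u ^ 2 + x ^ 2 / 4 / u ^ 2)) := by
    intro u hu
    have h4 : ((4 : ℝ) * π * u ^ 2) ^ (-(1 : ℝ) / 2) = (2 * Real.sqrt π * u)⁻¹ := by
      rw [show (-(1:ℝ)/2) = -(1/2) by norm_num,
        Real.rpow_neg (by positivity), ← Real.sqrt_eq_rpow,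
        show 4 * π * u ^ 2 = (2 * Real.sqrt π * u) ^ 2 from by
          rw [mul_pow, mul_pow, Real.sq_sqrt pi_pos.le]; ring,
        Real.sqrt_sq (by positivity)]
    have hmul : Real.exp (-l * u ^ 2) * Real.exp (-x ^ 2 / (4 * u ^ 2))
        = Real.exp (-(l * u ^ 2 + x ^ 2 / 4 / u ^ 2)) := by
      rw [← Real.exp_add]
      congr 1
      field_simp
      ring
    simp only [gaussE, h4]
    rw [← hmul]
    field_simp
  -- continuity on (0, ∞)
  have hgcont0 : ContinuousOn (fun t : ℝ => Real.exp (-l * t) * gaussE x t) (Ioi 0) := by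
    simp only [gaussE]
    apply ContinuousOn.mul
    · fun_prop
    apply ContinuousOn.mul
    · apply ContinuousOn.rpow_const (continuous_const.mul continuous_id).continuousOn
      intro t ht
      have ht' : (0:ℝ) < t := ht
      exact Or.inl (by show (4 * π * t : ℝ) ≠ 0; positivity)
    · apply Real.continuous_exp.comp_continuousOn
      apply ContinuousOn.div continuousOn_const (continuous_const.mul continuous_id).continuousOn
      intro t ht
      have : (0:ℝ) < t := ht
      show (4 * t : ℝ) ≠ 0
      positivity
  -- nonnegativity of the integrand on (0,∞)
  have hgnn : ∀ t : ℝ, 0 < t → 0 ≤ Real.exp (-l * t) * gaussE x t := by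
    intro t ht
    simp only [gaussE]
    have : (0:ℝ) < 4 * π * t := by positivity
    positivity
  -- integrability of the original integrand on (0, ∞)
  have hg_int : IntegrableOn (fun t : ℝ => Real.exp (-l * t) * gaussE x t) (Ioi 0) := by
    have hbase : IntegrableOn (fun y : ℝ => Real.exp (-y) * y ^ ((1:ℝ)/2 - 1)) (Ioi 0) :=
      Real.GammaIntegral_convergent one_half_pos
    have hscaled : IntegrableOn
        (fun t : ℝ => Real.exp (-(l * t)) * (l * t) ^ ((1:ℝ)/2 - 1)) (Ioi 0) := by
      have := (integrableOn_Ioi_comp_mul_left_iff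
        (fun y : ℝ => Real.exp (-y) * y ^ ((1:ℝ)/2 - 1)) 0 hl).mpr
      rw [mul_zero] at this
      exact this hbase
    have hdom : IntegrableOn
        (fun t : ℝ => (4 * π) ^ (-(1:ℝ)/2) * Real.sqrt l *
          (Real.exp (-(l * t)) * (l * t) ^ ((1:ℝ)/2 - 1))) (Ioi 0) :=
      hscaled.const_mul _
    apply Integrable.mono hdom (hgcont0.aestronglyMeasurable measurableSet_Ioi)
    rw [ae_restrict_iff' measurableSet_Ioi]
    filter_upwards with t ht
    have ht0 : (0:ℝ) < t := ht
    rw [Real.norm_eq_abs, abs_of_nonneg (hgnn t ht0), Real.norm_eq_abs]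
    have hdome : (4 * π) ^ (-(1:ℝ)/2) * Real.sqrt l *
        (Real.exp (-(l * t)) * (l * t) ^ ((1:ℝ)/2 - 1))
        = (4 * π * t) ^ (-(1:ℝ)/2) * Real.exp (-l * t) := by
      rw [show ((1:ℝ)/2 - 1) = -(1/2) by norm_num,
        show (-(1:ℝ)/2) = -(1/2) by norm_num,
        Real.mul_rpow (by positivity : (0:ℝ) ≤ 4 * π) ht0.le,
        Real.mul_rpow hl.le ht0.le,
        Real.rpow_neg hl.le, ← Real.sqrt_eq_rpow, neg_mul]
      have : Real.sqrt l * (Real.sqrt l)⁻¹ = 1 := mul_inv_cancel₀ hsl.ne'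
      field_simp
    rw [hdome, abs_of_nonneg (by positivity : (0:ℝ) ≤ (4 * π * t) ^ (-(1:ℝ)/2) * Real.exp (-l * t))]
    simp only [gaussE]
    have hA : (0:ℝ) ≤ (4 * π * t) ^ (-(1:ℝ)/2) := Real.rpow_nonneg (by positivity) _
    have hx1 : Real.exp (-x ^ 2 / (4 * t)) ≤ 1 := by
      apply Real.exp_le_one_iff.mpr
      rw [neg_div]
      have : (0:ℝ) ≤ x ^ 2 / (4 * t) := by positivity
      linarith
    nlinarith [mul_nonneg (mul_nonneg hA (Real.exp_pos (-l * t)).le)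
      (sub_nonneg.mpr hx1), Real.exp_pos (-x ^ 2 / (4 * t))]
  -- integrability of the substituted integrand on [0, ∞)
  have hsub_cont : ContinuousOn
      (fun u : ℝ => Real.exp (-l * u ^ 2) * gaussE x (u ^ 2) * (2 * u)) (Ioi 0) := by
    apply ContinuousOn.mul
    · exact hgcont0.comp (continuous_pow 2).continuousOn
        (fun u hu => mem_Ioi.mpr (pow_pos hu 2))
    · exact (continuous_const.mul continuous_id).continuousOn
  have hexp_int : Integrable (fun u : ℝ => (Real.sqrt π)⁻¹ * Real.exp (-l * u ^ 2)) :=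
    (integrable_exp_neg_mul_sq hl).const_mul _
  have hsub_int : IntegrableOn
      (fun u : ℝ => Real.exp (-l * u ^ 2) * gaussE x (u ^ 2) * (2 * u)) (Ici 0) := by
    rw [integrableOn_Ici_iff_integrableOn_Ioi]
    apply Integrable.mono hexp_int.integrableOn
      (hsub_cont.aestronglyMeasurable measurableSet_Ioi)
    rw [ae_restrict_iff' measurableSet_Ioi]
    filter_upwards with u hu
    have hu0 : (0:ℝ) < u := hu
    rw [key_pt u hu0, Real.norm_eq_abs, abs_of_nonneg (by positivity), Real.norm_eq_abs,
      abs_of_nonneg (by positivity)]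
    apply mul_le_mul_of_nonneg_left _ (by positivity)
    apply Real.exp_le_exp.mpr
    have : (0:ℝ) ≤ x ^ 2 / 4 / u ^ 2 := by positivity
    linarith
  -- change of variables t = u ^ 2
  have himg_Ioi : (fun u : ℝ => u ^ 2) '' Ioi 0 ⊆ Ioi 0 := by
    rintro t ⟨u, hu, rfl⟩
    exact pow_pos (show (0:ℝ) < u from hu) 2
  have himg_Ici : (fun u : ℝ => u ^ 2) '' Ici 0 ⊆ Ici 0 := by
    rintro t ⟨u, hu, rfl⟩
    exact pow_nonneg (show (0:ℝ) ≤ u from hu) 2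
  have key := MeasureTheory.integral_comp_mul_deriv_Ioi
    (f := fun u : ℝ => u ^ 2) (f' := fun u : ℝ => 2 * u)
    (g := fun t : ℝ => Real.exp (-l * t) * gaussE x t) (a := 0)
    (continuous_pow 2).continuousOn (Filter.tendsto_pow_atTop (by norm_num))
    (fun u hu => by
      have := hasDerivAt_pow 2 u
      norm_num at this
      exact this.hasDerivWithinAt)
    (hgcont0.mono himg_Ioi)
    (((integrableOn_Ici_iff_integrableOn_Ioi).mpr hg_int).mono_set himg_Ici)
    (by
      have : (fun u : ℝ => ((fun t : ℝ => Real.exp (-l * t) * gaussE x t)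
          ∘ fun u : ℝ => u ^ 2) u * (2 * u))
          = fun u : ℝ => Real.exp (-l * u ^ 2) * gaussE x (u ^ 2) * (2 * u) := by
        funext u
        simp [Function.comp]
      rw [this]
      exact hsub_int)
  rw [show ((0:ℝ) ^ 2) = 0 from by norm_num] at key
  -- express the original integral through the substituted one
  have stepA : (∫ t in Ioi (0:ℝ), Real.exp (-l * t) * gaussE x t)
      = (Real.sqrt π)⁻¹ * ∫ u in Ioi (0:ℝ), Real.exp (-(l * u ^ 2 + x ^ 2 / 4 / u ^ 2)) := by
    rw [← key]
    rw [show (∫ u in Ioi (0:ℝ), ((fun t : ℝ => Real.exp (-l * t) * gaussE x t)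
        ∘ fun u : ℝ => u ^ 2) u * (2 * u))
        = ∫ u in Ioi (0:ℝ), (Real.sqrt π)⁻¹ * Real.exp (-(l * u ^ 2 + x ^ 2 / 4 / u ^ 2)) from
      setIntegral_congr_fun measurableSet_Ioi (fun u hu => by
        have hu0 : (0:ℝ) < u := hu
        simp only [Function.comp]
        rw [← key_pt u hu0])]
    rw [MeasureTheory.integral_const_mul]
  rw [stepA]
  by_cases hx : x = 0
  · subst hx
    have e0 : (∫ u in Ioi (0:ℝ), Real.exp (-(l * u ^ 2 + 0 ^ 2 / 4 / u ^ 2)))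
        = ∫ u in Ioi (0:ℝ), Real.exp (-l * u ^ 2) := by
      refine setIntegral_congr_fun measurableSet_Ioi (fun u hu => ?_)
      norm_num
    rw [e0, integral_gaussian_Ioi]
    have hd : Real.sqrt (π / l) = Real.sqrt π / Real.sqrt l := Real.sqrt_div pi_pos.le l
    rw [hd]
    simp only [abs_zero, neg_zero, zero_mul, Real.exp_zero]
    field_simp
  · have hb : 0 < |x| / 2 := div_pos (abs_pos.mpr hx) two_pos
    have hpt : ∀ u : ℝ, 0 < u → Real.exp (-(l * u ^ 2 + x ^ 2 / 4 / u ^ 2))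
        = Real.exp (-(|x| * Real.sqrt l))
          * Real.exp (-(Real.sqrt l * u - (|x| / 2) / u) ^ 2) := by
      intro u hu
      rw [← Real.exp_add]
      congr 1
      exact exp_split (Real.sqrt l) |x| u l (x ^ 2) hu.ne' (Real.sq_sqrt hl.le) (sq_abs x)
    rw [show (∫ u in Ioi (0:ℝ), Real.exp (-(l * u ^ 2 + x ^ 2 / 4 / u ^ 2)))
        = ∫ u in Ioi (0:ℝ), Real.exp (-(|x| * Real.sqrt l))
            * Real.exp (-(Real.sqrt l * u - (|x| / 2) / u) ^ 2) from
      setIntegral_congr_fun measurableSet_Ioi (fun u hu => hpt u hu)]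
    rw [MeasureTheory.integral_const_mul, schlomilch hsl hb, neg_mul |x| (Real.sqrt l)]
    rw [← neg_mul]
    field_simp
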